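/- Let p ≥ 2 be an integer and let (H_k) be the Halley residuals H_k(z) = 1 - (1-z)/V_k(z)^p with V_0 ≡ 1 and V_{k+1} = V_k·((p-1)V_k^p + (p+1)(1-z))/((p+1)V_k^p + (p-1)(1-z)). Then for every k ≥ 1 and every z in the closed unit disk with z ∉ {0,1}, |H_k(z)| < |z|^{3^k}; in particular V_k has no zeros and no poles in the closed unit disk. -/

import Mathlib

open Filter Finset Topology

namespace Stmt14Aux

noncomputable def ee (β : ℝ) : ℕ → ℝ
  | 0 => 1
  | 1 => 1
  | n+2 => ee β (n+1) - β * ((n : ℝ) / ((n : ℝ)+2)) * ee β n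

variable {β : ℝ}

lemma ee_zero : ee β 0 = 1 := rfl
lemma ee_one : ee β 1 = 1 := rfl
lemma ee_succ_succ (n : ℕ) :
    ee β (n+2) = ee β (n+1) - β * ((n : ℝ) / ((n : ℝ)+2)) * ee β n := rfl

lemma ee_inv (hβ0 : 0 < β) (hβ : β ≤ 1/4) (n : ℕ) :
    0 < ee β (n+1) ∧ ee β (n+1) ≤ ee β n ∧ ee β n ≤ 2 * ee β (n+1) := by
  induction n with
  | zero => norm_num [ee_zero, ee_one]
  | succ n ih =>
    obtain ⟨h1, h2, h3⟩ := ih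
    have hn0 : (0:ℝ) ≤ ee β n := by linarith
    have hθ0 : 0 ≤ (n : ℝ) / ((n : ℝ)+2) := by positivity
    have hθ1 : (n : ℝ) / ((n : ℝ)+2) ≤ 1 := by
      rw [div_le_one (by positivity)]; linarith
    have hkey : β * ((n : ℝ) / ((n : ℝ)+2)) * ee β n ≤ (1/4) * ee β n := by
      have : β * ((n : ℝ) / ((n : ℝ)+2)) ≤ 1/4 := by nlinarith
      nlinarith
    have hkey0 : 0 ≤ β * ((n : ℝ) / ((n : ℝ)+2)) * ee β n := by positivity
    rw [ee_succ_succ]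
    refine ⟨by linarith, by linarith, by linarith⟩

lemma ee_pos (hβ0 : 0 < β) (hβ : β ≤ 1/4) (n : ℕ) : 0 < ee β n := by
  cases n with
  | zero => norm_num [ee_zero]
  | succ n => exact (ee_inv hβ0 hβ n).1

lemma ee_antitone (hβ0 : 0 < β) (hβ : β ≤ 1/4) (n : ℕ) : ee β (n+1) ≤ ee β n :=
  (ee_inv hβ0 hβ n).2.1

lemma ee_le_one (hβ0 : 0 < β) (hβ : β ≤ 1/4) (n : ℕ) : ee β n ≤ 1 := by
  induction n with
  | zero => norm_num [ee_zero]
  | succ n ih => exact le_trans (ee_antitone hβ0 hβ n) ih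

lemma ee_diff (n : ℕ) :
    ee β (n+1) - ee β (n+2) = β * ((n : ℝ) / ((n : ℝ)+2)) * ee β n := by
  rw [ee_succ_succ]; ring

lemma ee_summable (hβ0 : 0 < β) (hβ : β ≤ 1/4) : Summable (ee β) := by
  rw [← summable_nat_add_iff 2]
  apply summable_of_sum_range_le (c := (2/β) * ee β 3)
  · intro n; exact (ee_pos hβ0 hβ _).le
  · intro n
    have hterm : ∀ i : ℕ, ee β (i+2) ≤ (2/β) * (ee β (i+3) - ee β (i+4)) := by
      intro i
      have hd := ee_diff (β := β) (i+2)
      have hfrac : (1:ℝ)/2 ≤ ((i:ℝ)+2) / ((i:ℝ)+2+2) := by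
        rw [le_div_iff₀ (by positivity)]; push_cast; linarith
      have hpos : 0 < ee β (i+2) := ee_pos hβ0 hβ _
      have : ee β (i+3) - ee β (i+4) = β * (((i:ℝ)+2) / ((i:ℝ)+2+2)) * ee β (i+2) := by
        have := ee_diff (β := β) (i+2)
        push_cast at this ⊢
        convert this using 3 <;> push_cast <;> ring
      rw [this]
      rw [div_mul_eq_mul_div, le_div_iff₀ hβ0]
      nlinarith [mul_le_mul_of_nonneg_right (mul_le_mul_of_nonneg_left hfrac hβ0.le) hpos.le]
    calc ∑ i ∈ range n, ee β (i+2) ≤ ∑ i ∈ range n, (2/β) * (ee β (i+3) - ee β (i+4)) :=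
          Finset.sum_le_sum fun i _ => hterm i
      _ = (2/β) * ∑ i ∈ range n, (ee β (i+3) - ee β (i+4)) := by rw [Finset.mul_sum]
      _ = (2/β) * (ee β 3 - ee β (n+3)) := by
          rw [Finset.sum_range_sub' (fun i => ee β (i+3)) n]
      _ ≤ (2/β) * ee β 3 := by
          have := (ee_pos hβ0 hβ (n+3)).le
          have h2β : 0 ≤ 2/β := by positivity
          nlinarith

lemma ee_tendsto_zero (hβ0 : 0 < β) (hβ : β ≤ 1/4) : Tendsto (ee β) atTop (𝓝 0) :=
  (ee_summable hβ0 hβ).tendsto_atTop_zero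

noncomputable def gam (β : ℝ) (k : ℕ) : ℝ := ee β (k+2) - ee β (k+3)

lemma gam_nonneg (hβ0 : 0 < β) (hβ : β ≤ 1/4) (k : ℕ) : 0 ≤ gam β k :=
  sub_nonneg.2 (ee_antitone hβ0 hβ _)

lemma gam_summable (hβ0 : 0 < β) (hβ : β ≤ 1/4) : Summable (gam β) := by
  have h1 : Summable (fun k => ee β (k+2)) := (summable_nat_add_iff 2).2 (ee_summable hβ0 hβ)
  have h2 : Summable (fun k => ee β (k+3)) := (summable_nat_add_iff 3).2 (ee_summable hβ0 hβ)
  exact h1.sub h2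

lemma gam_hasSum (hβ0 : 0 < β) (hβ : β ≤ 1/4) : HasSum (gam β) 1 := by
  have hs := (gam_summable hβ0 hβ).hasSum
  have htel : Tendsto (fun n => ∑ k ∈ range n, gam β k) atTop (𝓝 1) := by
    have heq : ∀ n, ∑ k ∈ range n, gam β k = ee β 2 - ee β (n+2) := by
      intro n
      have := Finset.sum_range_sub' (fun k => ee β (k+2)) n
      simpa [gam] using this
    simp only [heq]
    have h2 : ee β 2 = 1 := by
      rw [ee_succ_succ]; norm_num [ee_zero, ee_one]
    rw [h2]
    have : Tendsto (fun n : ℕ => ee β (n+2)) atTop (𝓝 0) :=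
      (ee_tendsto_zero hβ0 hβ).comp (tendsto_add_atTop_nat 2)
    simpa using tendsto_const_nhds.sub this
  exact (tendsto_nhds_unique hs.tendsto_sum_nat htel) ▸ hs

lemma ee_two : ee β 2 = 1 := by rw [ee_succ_succ]; norm_num [ee_zero, ee_one]

lemma gam_zero : gam β 0 = β/3 := by
  have h3 : ee β 3 = ee β 2 - β * (1/3) * ee β 1 := by
    have := ee_succ_succ (β := β) 1; push_cast at this; convert this using 2 <;> norm_num
  simp [gam, h3, ee_two, ee_one]; ring

lemma gam_one : gam β 1 = β/2 := by
  have h4 : ee β 4 = ee β 3 - β * (1/2) * ee β 2 := by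
    have := ee_succ_succ (β := β) 2
    push_cast at this; convert this using 2 <;> norm_num
  simp [gam, h4, ee_two]; ring


noncomputable def S (β : ℝ) (z : ℂ) : ℂ := ∑' (n : ℕ), ((ee β n : ℝ) : ℂ) * z ^ n
noncomputable def T (β : ℝ) (z : ℂ) : ℂ :=
  ∑' (n : ℕ), (((n : ℂ) + 1) * ((ee β (n+1) : ℝ) : ℂ)) * z ^ n

lemma norm_ee_term (hβ0 : 0 < β) (hβ : β ≤ 1/4) (n : ℕ) (z : ℂ) :
    ‖((ee β n : ℝ) : ℂ) * z ^ n‖ = ee β n * ‖z‖ ^ n := by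
  rw [norm_mul, norm_pow, Complex.norm_real, Real.norm_eq_abs,
    abs_of_pos (ee_pos hβ0 hβ n)]

lemma S_summable (hβ0 : 0 < β) (hβ : β ≤ 1/4) {z : ℂ} (hz : ‖z‖ ≤ 1) :
    Summable (fun n => ((ee β n : ℝ) : ℂ) * z ^ n) := by
  apply Summable.of_norm_bounded (ee_summable hβ0 hβ)
  intro n
  rw [norm_ee_term hβ0 hβ]
  have h1 : ‖z‖ ^ n ≤ 1 := pow_le_one₀ (norm_nonneg z) hz
  nlinarith [(ee_pos hβ0 hβ n).le]

lemma S_hasSum (hβ0 : 0 < β) (hβ : β ≤ 1/4) {z : ℂ} (hz : ‖z‖ ≤ 1) :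
    HasSum (fun n => ((ee β n : ℝ) : ℂ) * z ^ n) (S β z) :=
  (S_summable hβ0 hβ hz).hasSum

lemma S_zero : S β 0 = 1 := by
  have h : HasSum (fun n => ((ee β n : ℝ) : ℂ) * (0:ℂ) ^ n) 1 := by
    have := hasSum_single (f := fun n => ((ee β n : ℝ) : ℂ) * (0:ℂ) ^ n) 0
      (by intro b hb; simp [zero_pow hb])
    simpa [ee_zero] using this
  exact h.tsum_eq

lemma aux_summable {r : ℝ} (h0 : 0 ≤ r) (h1 : r < 1) :
    Summable (fun n : ℕ => (n : ℝ) * r ^ (n - 1)) := by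
  rw [← summable_nat_add_iff 1]
  have hg : Summable (fun n : ℕ => (n : ℝ) * r ^ n) := by
    have := summable_pow_mul_geometric_of_norm_lt_one (R := ℝ) 1
      (r := r) (by rwa [Real.norm_eq_abs, abs_of_nonneg h0])
    simpa using this
  have hgeo : Summable (fun n : ℕ => r ^ n) := summable_geometric_of_lt_one h0 h1
  apply (hg.add hgeo).congr
  intro n
  simp only [Nat.add_sub_cancel]
  push_cast
  ring

lemma T_summable (hβ0 : 0 < β) (hβ : β ≤ 1/4) {z : ℂ} (hz : ‖z‖ < 1) :
    Summable (fun n : ℕ => (((n : ℂ) + 1) * ((ee β (n+1) : ℝ) : ℂ)) * z ^ n) := by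
  apply Summable.of_norm_bounded (g := fun n : ℕ => ((n:ℝ)+1) * ‖z‖ ^ n)
  · have h1 := summable_pow_mul_geometric_of_norm_lt_one (R := ℝ) 1
      (r := ‖z‖) (by rwa [Real.norm_eq_abs, abs_of_nonneg (norm_nonneg z)])
    have hgeo : Summable (fun n : ℕ => ‖z‖ ^ n) :=
      summable_geometric_of_lt_one (norm_nonneg z) hz
    apply ((by simpa using h1 : Summable (fun n : ℕ => (n:ℝ) * ‖z‖ ^ n)).add hgeo).congr
    intro n; ring
  · intro n
    rw [norm_mul, norm_mul, norm_pow, Complex.norm_real, Real.norm_eq_abs,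
      abs_of_pos (ee_pos hβ0 hβ (n+1))]
    have h1 : ‖(n : ℂ) + 1‖ = (n:ℝ) + 1 := by
      have h2 : ((n : ℂ) + 1) = ((n+1 : ℕ) : ℂ) := by push_cast; ring
      rw [h2, Complex.norm_natCast]; push_cast; ring
    rw [h1]
    have hee := ee_le_one hβ0 hβ (n+1)
    have hee0 := (ee_pos hβ0 hβ (n+1)).le
    have hzn : (0:ℝ) ≤ ‖z‖^n := by positivity
    have hn1 : (0:ℝ) ≤ (n:ℝ)+1 := by positivity
    calc ((n:ℝ)+1) * ee β (n+1) * ‖z‖^n ≤ ((n:ℝ)+1) * 1 * ‖z‖^n :=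
            mul_le_mul_of_nonneg_right (mul_le_mul_of_nonneg_left hee hn1) hzn
      _ = ((n:ℝ)+1) * ‖z‖^n := by ring

lemma T_hasSum (hβ0 : 0 < β) (hβ : β ≤ 1/4) {z : ℂ} (hz : ‖z‖ < 1) :
    HasSum (fun n : ℕ => (((n : ℂ) + 1) * ((ee β (n+1) : ℝ) : ℂ)) * z ^ n) (T β z) :=
  (T_summable hβ0 hβ hz).hasSum

lemma S_hasDerivAt (hβ0 : 0 < β) (hβ : β ≤ 1/4) {z : ℂ} (hz : ‖z‖ < 1) :
    HasDerivAt (S β) (T β z) z := by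
  set r : ℝ := (1 + ‖z‖)/2 with hr
  have hr0 : 0 < r := by positivity
  have hr1 : r < 1 := by rw [hr]; linarith
  have hzr : ‖z‖ < r := by rw [hr]; linarith
  have hu : Summable (fun n : ℕ => (n : ℝ) * r ^ (n - 1)) := aux_summable hr0.le hr1
  have hder := hasDerivAt_tsum_of_isPreconnected hu (Metric.isOpen_ball (x := (0:ℂ)) (ε := r))
    ((convex_ball (0:ℂ) r).isPreconnected)
    (g := fun n y => ((ee β n : ℝ) : ℂ) * y ^ n)
    (g' := fun n y => ((ee β n : ℝ) : ℂ) * ((n : ℂ) * y ^ (n - 1)))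
    (y₀ := 0) ?_ ?_ ?_ ?_ (by simpa [Metric.mem_ball, dist_eq_norm] using hzr)
  · have hsum : Summable (fun n => ((ee β n : ℝ) : ℂ) * ((n : ℂ) * z ^ (n - 1))) := by
      apply Summable.of_norm_bounded (aux_summable (norm_nonneg z) hz)
      intro n
      rw [norm_mul, norm_mul, norm_pow, Complex.norm_natCast, Complex.norm_real,
        Real.norm_eq_abs, abs_of_pos (ee_pos hβ0 hβ n)]
      have h1 := ee_le_one hβ0 hβ n
      have h2 := (ee_pos hβ0 hβ n).le
      have h3 : (0:ℝ) ≤ (n:ℝ) * ‖z‖^(n-1) := by positivity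
      calc ee β n * ((n:ℝ) * ‖z‖^(n-1)) ≤ 1 * ((n:ℝ) * ‖z‖^(n-1)) :=
            mul_le_mul_of_nonneg_right h1 h3
        _ = (n:ℝ) * ‖z‖^(n-1) := one_mul _
    have heq : ∑' n, ((ee β n : ℝ) : ℂ) * ((n : ℂ) * z ^ (n - 1)) = T β z := by
      have hA := hsum.hasSum
      have hshift := (hasSum_nat_add_iff
        (f := fun n => ((ee β n : ℝ) : ℂ) * ((n : ℂ) * z ^ (n - 1))) 1).mpr
        (by simpa using hA)
      have hfe : (fun n : ℕ => ((ee β (n+1) : ℝ) : ℂ) * (((n+1 : ℕ) : ℂ) * z ^ (n + 1 - 1)))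
          = fun n : ℕ => (((n : ℂ) + 1) * ((ee β (n+1) : ℝ) : ℂ)) * z ^ n := by
        funext n; push_cast; ring
      rw [hfe] at hshift
      have hT : T β z = ∑' (n : ℕ), (((n : ℂ) + 1) * ((ee β (n+1) : ℝ) : ℂ)) * z ^ n := rfl
      rw [hT]
      exact hshift.tsum_eq.symm
    rw [← heq]; exact hder
  · intro n y _
    exact (hasDerivAt_pow n y).const_mul ((ee β n : ℝ) : ℂ)
  · intro n y hy
    have hy' : ‖y‖ ≤ r := by
      rw [Metric.mem_ball, dist_eq_norm, sub_zero] at hy; exact hy.le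
    rw [norm_mul, norm_mul, norm_pow, Complex.norm_natCast, Complex.norm_real,
      Real.norm_eq_abs, abs_of_pos (ee_pos hβ0 hβ n)]
    have h1 := ee_le_one hβ0 hβ n
    have h2 := (ee_pos hβ0 hβ n).le
    have h3 : ‖y‖ ^ (n-1) ≤ r ^ (n-1) := pow_le_pow_left₀ (norm_nonneg y) hy' _
    have h4 : (0:ℝ) ≤ (n:ℝ) := by positivity
    have h5 : (n:ℝ) * ‖y‖^(n-1) ≤ (n:ℝ) * r^(n-1) := mul_le_mul_of_nonneg_left h3 h4
    calc ee β n * ((n:ℝ) * ‖y‖^(n-1)) ≤ 1 * ((n:ℝ) * r^(n-1)) :=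
          mul_le_mul h1 h5 (by positivity) one_pos.le
      _ = (n:ℝ) * r^(n-1) := one_mul _
  · exact Metric.mem_ball_self hr0
  · exact S_summable hβ0 hβ (by simp)


noncomputable def dd (β : ℝ) (z : ℂ) : ℕ → ℂ
  | 0 => 0
  | 1 => 0
  | (k+2) => (((k : ℂ) + 1) * ((ee β (k+1) : ℝ) : ℂ)) * z ^ (k+2)

lemma dd_zero {z : ℂ} : dd β z 0 = 0 := rfl
lemma dd_one {z : ℂ} : dd β z 1 = 0 := rfl
lemma dd_succ {z : ℂ} (k : ℕ) :
    dd β z (k+2) = (((k : ℂ) + 1) * ((ee β (k+1) : ℝ) : ℂ)) * z ^ (k+2) := rfl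

lemma ode (hβ0 : 0 < β) (hβ : β ≤ 1/4) {z : ℂ} (hz : ‖z‖ < 1) :
    (1 - z + (β : ℂ) * z ^ 2) * T β z = S β z := by
  have hT := T_hasSum hβ0 hβ hz
  have h1 : HasSum (fun n : ℕ => ((n : ℂ) * ((ee β n : ℝ) : ℂ)) * z ^ n) (z * T β z) := by
    have h := hT.mul_left z
    have hfe : (fun n : ℕ => z * ((((n : ℂ) + 1) * ((ee β (n+1) : ℝ) : ℂ)) * z ^ n))
        = fun n : ℕ => (fun m : ℕ => ((m : ℂ) * ((ee β m : ℝ) : ℂ)) * z ^ m) (n+1) := by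
      funext n; push_cast; ring
    rw [hfe] at h
    have h' := (hasSum_nat_add_iff (f := fun m : ℕ => ((m : ℂ) * ((ee β m : ℝ) : ℂ)) * z ^ m) 1).mp h
    simpa using h'
  have h2 : HasSum (dd β z) ((z^2) * T β z) := by
    have h := hT.mul_left (z^2)
    have hfe : (fun n : ℕ => z^2 * ((((n : ℂ) + 1) * ((ee β (n+1) : ℝ) : ℂ)) * z ^ n))
        = fun n : ℕ => dd β z (n+2) := by
      funext n; rw [dd_succ]; ring
    rw [hfe] at h
    have h' := (hasSum_nat_add_iff (f := dd β z) 2).mp h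
    have hz2 : ∑ i ∈ range 2, dd β z i = 0 := by
      rw [Finset.sum_range_succ, Finset.sum_range_one, dd_zero, dd_one]; ring
    rw [hz2, add_zero] at h'
    exact h'
  have hcomb := (hT.sub h1).add (h2.mul_left (β : ℂ))
  have hfe2 : (fun n : ℕ =>
      ((((n : ℂ) + 1) * ((ee β (n+1) : ℝ) : ℂ)) * z ^ n - ((n : ℂ) * ((ee β n : ℝ) : ℂ)) * z ^ n)
        + (β:ℂ) * dd β z n)
      = fun n : ℕ => ((ee β n : ℝ) : ℂ) * z ^ n := by
    funext n
    match n with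
    | 0 => simp [ee_zero, ee_one, dd_zero]
    | 1 =>
      rw [dd_one, (ee_two : ee β 2 = 1), ee_one]
      push_cast
      ring
    | (k+2) =>
      rw [dd_succ]
      have hrec : ((k:ℝ)+3) * ee β (k+3) - ((k:ℝ)+2) * ee β (k+2) + β * ((k:ℝ)+1) * ee β (k+1)
          = ee β (k+2) := by
        have h := ee_succ_succ (β := β) (k+1)
        have hcast : ((k+1 : ℕ) : ℝ) = (k:ℝ)+1 := by push_cast; ring
        rw [hcast] at h
        have hne : ((k:ℝ)+1)+2 ≠ 0 := by positivity
        have h' : ee β (k+3) = ee β (k+2) - β * (((k:ℝ)+1) / ((k:ℝ)+3)) * ee β (k+1) := by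
          have : (k:ℝ)+1+2 = (k:ℝ)+3 := by ring
          rw [this] at h
          exact h
        rw [h']
        have hne3 : ((k:ℝ)+3) ≠ 0 := by positivity
        field_simp
        ring
      have hcc := congrArg (fun x : ℝ => (x : ℂ)) hrec
      push_cast at hcc
      push_cast
      linear_combination (z^(k+2)) * hcc
  rw [hfe2] at hcomb
  have hS := S_hasSum hβ0 hβ hz.le
  have hu := hS.unique hcomb
  rw [hu]; ring

lemma one_sub_ne {a : ℝ} (ha0 : 0 ≤ a) (ha : a < 1) {z : ℂ} (hz : ‖z‖ ≤ 1) :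
    (1 : ℂ) - (a : ℂ) * z ≠ 0 := by
  intro h
  have h1 : (1:ℂ) = (a:ℂ) * z := by linear_combination h
  have h2 : (1:ℝ) = ‖(a:ℂ) * z‖ := by rw [← h1]; simp
  rw [norm_mul, Complex.norm_real, Real.norm_eq_abs, abs_of_nonneg ha0] at h2
  nlinarith [norm_nonneg z]

section Gconst

variable {p : ℕ} {bb cc : ℝ}

lemma S_mul_eq (hβ0 : 0 < β) (hβ4 : β ≤ 1/4)
    (hb0 : 0 ≤ bb) (hb1 : bb < 1) (hc0 : 0 ≤ cc) (hc1 : cc < 1)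
    (hbc : bb + cc = 1) (hβdef : bb * cc = β) (hpcb : (p:ℝ) * (cc - bb) = 1)
    (hp : 2 ≤ p)
    {z : ℂ} (hz : ‖z‖ < 1) :
    S β z * (1 - (cc:ℂ) * z) ^ p = (1 - (bb:ℂ) * z) ^ p := by
  obtain ⟨q, rfl⟩ : ∃ q, p = q + 1 := ⟨p - 1, by omega⟩
  set G : ℂ → ℂ := fun y => S β y * (1 - (cc:ℂ) * y) ^ (q+1) * (((1 - (bb:ℂ) * y) ^ (q+1))⁻¹)
    with hG
  have hBne : ∀ y : ℂ, ‖y‖ ≤ 1 → (1 - (bb:ℂ) * y) ≠ 0 := fun y hy => one_sub_ne hb0 hb1 hy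
  have hCne : ∀ y : ℂ, ‖y‖ ≤ 1 → (1 - (cc:ℂ) * y) ≠ 0 := fun y hy => one_sub_ne hc0 hc1 hy
  have hderiv : ∀ y ∈ Metric.ball (0:ℂ) 1, HasDerivAt G 0 y := by
    intro y hy
    have hy1 : ‖y‖ < 1 := by simpa [Metric.mem_ball, dist_eq_norm] using hy
    have hB : HasDerivAt (fun y : ℂ => 1 - (bb:ℂ) * y) (-(bb:ℂ)) y := by
      simpa using ((hasDerivAt_id y).const_mul (bb:ℂ)).const_sub 1
    have hC : HasDerivAt (fun y : ℂ => 1 - (cc:ℂ) * y) (-(cc:ℂ)) y := by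
      simpa using ((hasDerivAt_id y).const_mul (cc:ℂ)).const_sub 1
    have hBp : HasDerivAt (fun y : ℂ => (1 - (bb:ℂ) * y) ^ (q+1))
        (((q:ℂ)+1) * (1 - (bb:ℂ) * y) ^ q * (-(bb:ℂ))) y := by
      have := hB.fun_pow (q+1)
      simpa using this
    have hCp : HasDerivAt (fun y : ℂ => (1 - (cc:ℂ) * y) ^ (q+1))
        (((q:ℂ)+1) * (1 - (cc:ℂ) * y) ^ q * (-(cc:ℂ))) y := by
      have := hC.fun_pow (q+1)
      simpa using this
    have hBinv : HasDerivAt (fun y : ℂ => ((1 - (bb:ℂ) * y) ^ (q+1))⁻¹)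
        (-(((q:ℂ)+1) * (1 - (bb:ℂ) * y) ^ q * (-(bb:ℂ))) / ((1 - (bb:ℂ) * y) ^ (q+1)) ^ 2) y :=
      hBp.inv (pow_ne_zero _ (hBne y hy1.le))
    have hSd : HasDerivAt (S β) (T β y) y := S_hasDerivAt hβ0 hβ4 hy1
    have htot := (hSd.mul hCp).mul hBinv
    have hode := ode hβ0 hβ4 hy1
    have hbcℂ : (bb:ℂ) + (cc:ℂ) = 1 := by exact_mod_cast hbc
    have hβℂ : (bb:ℂ) * (cc:ℂ) = (β:ℂ) := by exact_mod_cast hβdef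
    have hpcbℂ : ((q:ℂ)+1) * ((cc:ℂ) - (bb:ℂ)) = 1 := by
      have : ((q+1 : ℕ):ℝ) * (cc - bb) = 1 := hpcb
      exact_mod_cast this
    have hodeBC : T β y * ((1 - (bb:ℂ)*y) * (1 - (cc:ℂ)*y)) = S β y := by
      linear_combination hode - (T β y * y) * hbcℂ + (T β y * y^2) * hβℂ
    have hzero : (T β y * (1 - (cc:ℂ)*y)^(q+1) + S β y * (((q:ℂ)+1) * (1 - (cc:ℂ)*y)^q * (-(cc:ℂ))))
          * ((1 - (bb:ℂ)*y)^(q+1))⁻¹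
        + S β y * (1 - (cc:ℂ)*y)^(q+1) *
          (-(((q:ℂ)+1) * (1 - (bb:ℂ)*y)^q * (-(bb:ℂ))) / ((1 - (bb:ℂ)*y)^(q+1))^2) = 0 := by
      have hBne' := hBne y hy1.le
      have key : T β y * (1 - (cc:ℂ)*y) * (1 - (bb:ℂ)*y) - S β y * ((q:ℂ)+1) *
          ((cc:ℂ) * (1 - (bb:ℂ)*y) - (bb:ℂ) * (1 - (cc:ℂ)*y)) = 0 := by
        linear_combination hodeBC - S β y * hpcbℂ
      generalize (1 - (bb:ℂ)*y) = B at hBne' key ⊢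
      field_simp
      linear_combination B^q * (1 - (cc:ℂ)*y)^q * key
    rw [hG]
    exact htot.congr_deriv hzero
  have hdOn : DifferentiableOn ℂ G (Metric.ball (0:ℂ) 1) := fun x hx =>
    ((hderiv x hx).differentiableAt).differentiableWithinAt
  have hf' : ∀ x ∈ Metric.ball (0:ℂ) 1, fderivWithin ℂ G (Metric.ball (0:ℂ) 1) x = 0 := by
    intro x hx
    rw [fderivWithin_of_isOpen Metric.isOpen_ball hx,
      ((hderiv x hx).hasFDerivAt).fderiv]
    ext v
    simp
  have hzmem : z ∈ Metric.ball (0:ℂ) 1 := by simpa [Metric.mem_ball, dist_eq_norm] using hz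
  have h0mem : (0:ℂ) ∈ Metric.ball (0:ℂ) 1 := Metric.mem_ball_self one_pos
  have hconst : G z = G 0 :=
    (convex_ball (0:ℂ) 1).is_const_of_fderivWithin_eq_zero hdOn hf' hzmem h0mem
  have hG0 : G 0 = 1 := by
    rw [hG]
    simp [S_zero]
  rw [hG0] at hconst
  have hBz := one_sub_ne hb0 hb1 hz.le (a := bb)
  rw [hG] at hconst
  field_simp at hconst
  rw [div_eq_one_iff_eq (pow_ne_zero _ (by rw [mul_comm]; exact hBz))] at hconst
  rw [hconst]; ring



end Gconst

/-- series representation of the residual -/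
lemma resid_hasSum (hβ0 : 0 < β) (hβ4 : β ≤ 1/4) {z : ℂ} (hz : ‖z‖ ≤ 1) :
    HasSum (fun k : ℕ => ((gam β k : ℝ) : ℂ) * z ^ (k+3)) (1 - (1-z) * S β z) := by
  have hS := S_hasSum hβ0 hβ4 hz
  have h1 : HasSum (fun n : ℕ => ((ee β n : ℝ) : ℂ) * z ^ (n+1)) (z * S β z) := by
    have h := hS.mul_left z
    have hfe : (fun n : ℕ => z * (((ee β n : ℝ) : ℂ) * z ^ n))
        = fun n : ℕ => ((ee β n : ℝ) : ℂ) * z ^ (n+1) := by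
      funext n; ring
    rwa [hfe] at h
  have h2 : HasSum (fun n : ℕ => ((ee β (n+1) : ℝ) : ℂ) * z ^ (n+1)) (S β z - 1) := by
    apply (hasSum_nat_add_iff (f := fun n : ℕ => ((ee β n : ℝ) : ℂ) * z ^ n) 1).mpr
    have : (S β z - 1) + ∑ i ∈ range 1, ((ee β i : ℝ) : ℂ) * z ^ i = S β z := by
      simp [ee_zero]
    rw [this]
    exact hS
  have h3 := h1.sub h2
  have h4 : HasSum (fun k : ℕ =>
        (fun n : ℕ => ((ee β n : ℝ) : ℂ) * z ^ (n+1) - ((ee β (n+1) : ℝ) : ℂ) * z ^ (n+1)) (k+2))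
      (1 - (1-z) * S β z) := by
    apply (hasSum_nat_add_iff
      (f := fun n : ℕ => ((ee β n : ℝ) : ℂ) * z ^ (n+1) - ((ee β (n+1) : ℝ) : ℂ) * z ^ (n+1)) 2).mpr
    have hval : (1 - (1-z) * S β z) + ∑ i ∈ range 2,
        (((ee β i : ℝ) : ℂ) * z ^ (i+1) - ((ee β (i+1) : ℝ) : ℂ) * z ^ (i+1))
        = z * S β z - (S β z - 1) := by
      rw [Finset.sum_range_succ, Finset.sum_range_one]
      rw [ee_zero, ee_one, (ee_two : ee β 2 = 1)]
      push_cast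
      ring
    rw [hval]
    exact h3
  have hfe2 : (fun k : ℕ =>
        (fun n : ℕ => ((ee β n : ℝ) : ℂ) * z ^ (n+1) - ((ee β (n+1) : ℝ) : ℂ) * z ^ (n+1)) (k+2))
      = fun k : ℕ => ((gam β k : ℝ) : ℂ) * z ^ (k+3) := by
    funext k
    simp only [gam]
    push_cast
    ring
  rwa [hfe2] at h4

/-- the crude but uniform bound on the closed disk, open-ball version via the series -/
lemma resid_bound_open (hβ0 : 0 < β) (hβ4 : β ≤ 1/4) {z : ℂ} (hz : ‖z‖ ≤ 1) :
    ‖1 - (1-z) * S β z‖ ≤ ‖z‖^3 * (‖((gam β 0 : ℝ) : ℂ) + ((gam β 1 : ℝ) : ℂ) * z‖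
      + (1 - gam β 0 - gam β 1)) := by
  have h := resid_hasSum hβ0 hβ4 hz
  have htail : HasSum (fun k : ℕ => ((gam β (k+2) : ℝ) : ℂ) * z ^ (k+5))
      ((1 - (1-z) * S β z) - (((gam β 0 : ℝ) : ℂ) * z^3 + ((gam β 1 : ℝ) : ℂ) * z^4)) := by
    have := (hasSum_nat_add_iff (f := fun k : ℕ => ((gam β k : ℝ) : ℂ) * z ^ (k+3)) 2
      (g := (1 - (1-z) * S β z) - (((gam β 0 : ℝ) : ℂ) * z^3 + ((gam β 1 : ℝ) : ℂ) * z^4))).mpr ?_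
    · have hfe : (fun k : ℕ => ((gam β (k+2) : ℝ) : ℂ) * z ^ (k+2+3))
          = fun k : ℕ => ((gam β (k+2) : ℝ) : ℂ) * z ^ (k+5) := by
        funext k; norm_num
      rwa [hfe] at this
    · have : ((1 - (1-z) * S β z) - (((gam β 0 : ℝ) : ℂ) * z^3 + ((gam β 1 : ℝ) : ℂ) * z^4))
          + ∑ i ∈ range 2, ((gam β i : ℝ) : ℂ) * z ^ (i+3) = 1 - (1-z) * S β z := by
        rw [Finset.sum_range_succ, Finset.sum_range_one]
        push_cast
        ring
      rw [this]
      exact h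
  have hgamtail : HasSum (fun k : ℕ => gam β (k+2)) (1 - gam β 0 - gam β 1) := by
    have := (hasSum_nat_add_iff (f := gam β) 2 (g := 1 - gam β 0 - gam β 1)).mpr ?_
    · exact this
    · have : (1 - gam β 0 - gam β 1) + ∑ i ∈ range 2, gam β i = 1 := by
        rw [Finset.sum_range_succ, Finset.sum_range_one]; ring
      rw [this]
      exact gam_hasSum hβ0 hβ4
  -- bound of the tail
  have htail_bound : ‖(1 - (1-z) * S β z) - (((gam β 0 : ℝ) : ℂ) * z^3 + ((gam β 1 : ℝ) : ℂ) * z^4)‖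
      ≤ (1 - gam β 0 - gam β 1) * ‖z‖^3 := by
    rw [← htail.tsum_eq]
    have hsummable := htail.summable
    have hnorm_summable : Summable (fun k : ℕ => ‖((gam β (k+2) : ℝ) : ℂ) * z ^ (k+5)‖) := by
      apply Summable.of_nonneg_of_le (fun k => norm_nonneg _)
        (fun k => ?_) (((gam_summable hβ0 hβ4).comp_injective
          (add_left_injective 2)).mul_right (‖z‖^3))
      · rw [norm_mul, norm_pow, Complex.norm_real, Real.norm_eq_abs,
          abs_of_nonneg (gam_nonneg hβ0 hβ4 _)]
        have h5 : ‖z‖^(k+5) ≤ ‖z‖^3 := by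
          apply pow_le_pow_of_le_one (norm_nonneg z) hz
          omega
        have := gam_nonneg hβ0 hβ4 (k+2)
        calc gam β (k+2) * ‖z‖^(k+5) ≤ gam β (k+2) * ‖z‖^3 :=
              mul_le_mul_of_nonneg_left h5 this
          _ = (fun k => gam β (k+2) * ‖z‖^3) k := rfl
    calc ‖∑' k, ((gam β (k+2) : ℝ) : ℂ) * z ^ (k+5)‖
        ≤ ∑' k, ‖((gam β (k+2) : ℝ) : ℂ) * z ^ (k+5)‖ := norm_tsum_le_tsum_norm hnorm_summable
      _ ≤ ∑' k, gam β (k+2) * ‖z‖^3 := by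
          apply Summable.tsum_le_tsum _ hnorm_summable
            (((gam_summable hβ0 hβ4).comp_injective (add_left_injective 2)).mul_right (‖z‖^3))
          intro k
          rw [norm_mul, norm_pow, Complex.norm_real, Real.norm_eq_abs,
            abs_of_nonneg (gam_nonneg hβ0 hβ4 _)]
          have h5 : ‖z‖^(k+5) ≤ ‖z‖^3 := by
            apply pow_le_pow_of_le_one (norm_nonneg z) hz
            omega
          have := gam_nonneg hβ0 hβ4 (k+2)
          exact mul_le_mul_of_nonneg_left h5 this
      _ = (1 - gam β 0 - gam β 1) * ‖z‖^3 := by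
          rw [tsum_mul_right, hgamtail.tsum_eq]
  have hhead : ‖((gam β 0 : ℝ) : ℂ) * z^3 + ((gam β 1 : ℝ) : ℂ) * z^4‖
      = ‖z‖^3 * ‖((gam β 0 : ℝ) : ℂ) + ((gam β 1 : ℝ) : ℂ) * z‖ := by
    have : ((gam β 0 : ℝ) : ℂ) * z^3 + ((gam β 1 : ℝ) : ℂ) * z^4
        = z^3 * (((gam β 0 : ℝ) : ℂ) + ((gam β 1 : ℝ) : ℂ) * z) := by ring
    rw [this, norm_mul, norm_pow]
  calc ‖1 - (1-z) * S β z‖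
      ≤ ‖((gam β 0 : ℝ) : ℂ) * z^3 + ((gam β 1 : ℝ) : ℂ) * z^4‖
        + ‖(1 - (1-z) * S β z) - (((gam β 0 : ℝ) : ℂ) * z^3 + ((gam β 1 : ℝ) : ℂ) * z^4)‖ := by
        have := norm_add_le (((gam β 0 : ℝ) : ℂ) * z^3 + ((gam β 1 : ℝ) : ℂ) * z^4)
          ((1 - (1-z) * S β z) - (((gam β 0 : ℝ) : ℂ) * z^3 + ((gam β 1 : ℝ) : ℂ) * z^4))
        simpa using this
    _ ≤ ‖z‖^3 * ‖((gam β 0 : ℝ) : ℂ) + ((gam β 1 : ℝ) : ℂ) * z‖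
        + (1 - gam β 0 - gam β 1) * ‖z‖^3 := by
        rw [hhead]
        exact add_le_add le_rfl htail_bound
    _ = ‖z‖^3 * (‖((gam β 0 : ℝ) : ℂ) + ((gam β 1 : ℝ) : ℂ) * z‖ + (1 - gam β 0 - gam β 1)) := by
        ring


lemma sum_g01_le (hβ0 : 0 < β) (hβ4 : β ≤ 1/4) : gam β 0 + gam β 1 ≤ 1 := by
  have h := gam_hasSum hβ0 hβ4
  have h2 : ∑ i ∈ range 2, gam β i ≤ 1 :=
    sum_le_hasSum (range 2) (fun i _ => gam_nonneg hβ0 hβ4 i) h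
  rw [Finset.sum_range_succ, Finset.sum_range_one] at h2
  linarith

lemma factor_lt (hβ0 : 0 < β) (hβ4 : β ≤ 1/4) {z : ℂ} (hz : ‖z‖ ≤ 1) (hz1 : z ≠ 1) :
    ‖((gam β 0 : ℝ) : ℂ) + ((gam β 1 : ℝ) : ℂ) * z‖ + (1 - gam β 0 - gam β 1) < 1 := by
  have hg0 : gam β 0 = β/3 := gam_zero
  have hg1 : gam β 1 = β/2 := gam_one
  have hg0pos : 0 < gam β 0 := by rw [hg0]; positivity
  have hg1pos : 0 < gam β 1 := by rw [hg1]; positivity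
  have hkey : ‖((gam β 0 : ℝ) : ℂ) + ((gam β 1 : ℝ) : ℂ) * z‖ < gam β 0 + gam β 1 := by
    rcases lt_or_eq_of_le hz with hlt | heq
    · calc ‖((gam β 0 : ℝ) : ℂ) + ((gam β 1 : ℝ) : ℂ) * z‖
          ≤ ‖((gam β 0 : ℝ) : ℂ)‖ + ‖((gam β 1 : ℝ) : ℂ) * z‖ := norm_add_le _ _
        _ = gam β 0 + gam β 1 * ‖z‖ := by
            rw [norm_mul, Complex.norm_real, Complex.norm_real, Real.norm_eq_abs,
              Real.norm_eq_abs, abs_of_pos hg0pos, abs_of_pos hg1pos]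
        _ < gam β 0 + gam β 1 := by nlinarith
    · -- boundary case ‖z‖ = 1
      have hn1 : ‖z‖ = 1 := heq
      have hsq : z.re^2 + z.im^2 = 1 := by
        have := Complex.sq_norm z
        rw [Complex.normSq_apply] at this
        rw [hn1] at this
        nlinarith [this]
      have hre1 : z.re < 1 := by
        rcases lt_or_eq_of_le (by
          calc z.re ≤ ‖z‖ := Complex.re_le_norm z
            _ = 1 := by rw [hn1]) with h | h
        · exact h
        · exfalso
          apply hz1
          have him : z.im = 0 := by nlinarith
          apply Complex.ext <;> simp [h, him]
      have hnormsq : ‖((gam β 0 : ℝ) : ℂ) + ((gam β 1 : ℝ) : ℂ) * z‖^2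
          < (gam β 0 + gam β 1)^2 := by
        have hns : ‖((gam β 0 : ℝ) : ℂ) + ((gam β 1 : ℝ) : ℂ) * z‖^2
            = Complex.normSq (((gam β 0 : ℝ) : ℂ) + ((gam β 1 : ℝ) : ℂ) * z) := by
          rw [Complex.sq_norm]
        rw [hns, Complex.normSq_apply]
        simp only [Complex.add_re, Complex.add_im, Complex.mul_re, Complex.mul_im,
          Complex.ofReal_re, Complex.ofReal_im]
        nlinarith [mul_pos (mul_pos hg0pos hg1pos) (sub_pos.mpr hre1), hsq,
          sq_nonneg (gam β 1)]
      have := lt_of_pow_lt_pow_left₀ 2 (by positivity : (0:ℝ) ≤ gam β 0 + gam β 1) hnormsq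
      exact this
  linarith

lemma key (p : ℕ) (hp : 2 ≤ p) {w : ℂ} (hw : ‖w‖ ≤ 1) (hw0 : w ≠ 0) (hw1 : w ≠ 1) :
    ‖1 - (1 - w) * ((2*(p:ℂ) - ((p:ℂ)-1) * w) ^ p / (2*(p:ℂ) - ((p:ℂ)+1) * w) ^ p)‖
      < ‖w‖^3 := by
  have hp2 : (2:ℝ) ≤ (p:ℝ) := by exact_mod_cast hp
  have hppos : (0:ℝ) < (p:ℝ) := by linarith
  set bb : ℝ := ((p:ℝ)-1)/(2*(p:ℝ)) with hbbdef
  set cc : ℝ := ((p:ℝ)+1)/(2*(p:ℝ)) with hccdef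
  set β : ℝ := bb * cc with hβdef
  have hbpos : 0 < bb := by
    rw [hbbdef]
    apply div_pos (by linarith) (by positivity)
  have hb0 : 0 ≤ bb := hbpos.le
  have hb1 : bb < 1 := by rw [hbbdef, div_lt_one (by positivity)]; linarith
  have hc0 : 0 ≤ cc := by rw [hccdef]; positivity
  have hc1 : cc < 1 := by rw [hccdef, div_lt_one (by positivity)]; linarith
  have hpne : (p:ℝ) ≠ 0 := hppos.ne'
  have hbc : bb + cc = 1 := by rw [hbbdef, hccdef]; field_simp; ring
  have hpcb : (p:ℝ) * (cc - bb) = 1 := by rw [hbbdef, hccdef]; field_simp; ring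
  have hβ0 : 0 < β := by rw [hβdef]; positivity
  have hβ4 : β ≤ 1/4 := by
    rw [hβdef]
    nlinarith [sq_nonneg (bb - cc), hbc]
  -- open ball bound
  have openb : ∀ v : ℂ, ‖v‖ < 1 →
      ‖1 - (1-v) * ((1-(bb:ℂ)*v)^p / (1-(cc:ℂ)*v)^p)‖
        ≤ ‖v‖^3 * (‖((gam β 0 : ℝ) : ℂ) + ((gam β 1 : ℝ) : ℂ) * v‖
          + (1 - gam β 0 - gam β 1)) := by
    intro v hv
    have hid := S_mul_eq (p := p) (bb := bb) (cc := cc) hβ0 hβ4 hb0 hb1 hc0 hc1 hbc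
      rfl hpcb hp hv
    have hCp : (1-(cc:ℂ)*v)^p ≠ 0 := pow_ne_zero _ (one_sub_ne hc0 hc1 hv.le)
    have hrw : (1-(bb:ℂ)*v)^p / (1-(cc:ℂ)*v)^p = S β v := by
      rw [← hid]
      field_simp
    rw [hrw]
    exact resid_bound_open hβ0 hβ4 hv.le
  -- closed ball bound, by a limiting argument
  have closedb : ‖1 - (1-w) * ((1-(bb:ℂ)*w)^p / (1-(cc:ℂ)*w)^p)‖
      ≤ ‖w‖^3 * (‖((gam β 0 : ℝ) : ℂ) + ((gam β 1 : ℝ) : ℂ) * w‖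
        + (1 - gam β 0 - gam β 1)) := by
    rcases lt_or_eq_of_le hw with hlt | heq
    · exact openb w hlt
    · have hn1 : ‖w‖ = 1 := heq
      set t : ℕ → ℝ := fun n => 1 - 1/((n:ℝ)+2) with ht
      have ht0 : ∀ n, 0 ≤ t n := by
        intro n
        rw [ht]
        simp only
        have : 1/((n:ℝ)+2) ≤ 1 := by
          rw [div_le_one (by positivity)]; linarith [Nat.cast_nonneg (α := ℝ) n]
        linarith
      have ht1 : ∀ n, t n < 1 := by
        intro n
        rw [ht]
        simp only
        have : 0 < 1/((n:ℝ)+2) := by positivity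
        linarith
      set wseq : ℕ → ℂ := fun n => ((t n : ℝ) : ℂ) * w with hwseq
      have hwn : ∀ n, ‖wseq n‖ < 1 := by
        intro n
        rw [hwseq]
        simp only [norm_mul, Complex.norm_real, Real.norm_eq_abs, abs_of_nonneg (ht0 n), hn1,
          mul_one]
        exact ht1 n
      have htendt : Tendsto t atTop (𝓝 1) := by
        rw [ht]
        have h0 : Tendsto (fun n : ℕ => 1/((n:ℝ)+2)) atTop (𝓝 0) := by
          have h1 := tendsto_one_div_add_atTop_nhds_zero_nat (𝕜 := ℝ)
          have h2 := h1.comp (tendsto_add_atTop_nat 1)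
          have h3 : (fun n : ℕ => 1/((n:ℝ)+2))
              = (fun n : ℕ => 1/((n:ℝ)+1)) ∘ (fun n : ℕ => n + 1) := by
            funext n
            simp only [Function.comp_apply]
            push_cast
            ring_nf
          rw [h3]
          exact h2
        simpa using tendsto_const_nhds.sub h0
      have htend : Tendsto wseq atTop (𝓝 w) := by
        rw [hwseq]
        have h1 : Tendsto (fun n : ℕ => ((t n : ℝ) : ℂ)) atTop (𝓝 1) := by
          have := (Complex.continuous_ofReal.tendsto 1).comp htendt
          simpa [Function.comp_def] using this
        simpa using h1.mul tendsto_const_nhds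
      have hbne : (1 - (bb:ℂ)*w) ≠ 0 := one_sub_ne hb0 hb1 hw
      have hcne : (1 - (cc:ℂ)*w) ≠ 0 := one_sub_ne hc0 hc1 hw
      have hcpne : (1-(cc:ℂ)*w)^p ≠ 0 := pow_ne_zero _ hcne
      have hcontL : ContinuousAt (fun v : ℂ =>
          ‖1 - (1-v) * ((1-(bb:ℂ)*v)^p / (1-(cc:ℂ)*v)^p)‖) w := by
        apply ContinuousAt.norm
        apply ContinuousAt.sub continuousAt_const
        apply ContinuousAt.mul (continuousAt_const.sub continuousAt_id)
        apply ContinuousAt.div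
        · exact ((continuousAt_const.sub (continuousAt_const.mul continuousAt_id)).pow p)
        · exact ((continuousAt_const.sub (continuousAt_const.mul continuousAt_id)).pow p)
        · exact hcpne
      have hcontR : ContinuousAt (fun v : ℂ =>
          ‖v‖^3 * (‖((gam β 0 : ℝ) : ℂ) + ((gam β 1 : ℝ) : ℂ) * v‖
            + (1 - gam β 0 - gam β 1))) w := by
        apply ContinuousAt.mul
        · exact (continuousAt_id.norm).pow 3
        · exact ((continuousAt_const.add (continuousAt_const.mul continuousAt_id)).norm).add
            continuousAt_const
      exact le_of_tendsto_of_tendsto' (hcontL.tendsto.comp htend) (hcontR.tendsto.comp htend)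
        (fun n => openb (wseq n) (hwn n))
  -- rewrite the target in normalized form
  have h2p : (2*(p:ℂ)) ≠ 0 := by
    simp only [ne_eq, mul_eq_zero]
    push_neg
    constructor
    · norm_num
    · exact_mod_cast (by positivity : (0:ℝ) < (p:ℝ)).ne'
  have hbbC : ((bb:ℝ):ℂ) * (2*(p:ℂ)) = (p:ℂ) - 1 := by
    have hr : bb * (2*(p:ℝ)) = (p:ℝ) - 1 := by
      rw [hbbdef]; field_simp
    calc ((bb:ℝ):ℂ) * (2*(p:ℂ)) = (((bb * (2*(p:ℝ))):ℝ):ℂ) := by push_cast; ring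
      _ = (p:ℂ) - 1 := by rw [hr]; push_cast; ring
  have hccC : ((cc:ℝ):ℂ) * (2*(p:ℂ)) = (p:ℂ) + 1 := by
    have hr : cc * (2*(p:ℝ)) = (p:ℝ) + 1 := by
      rw [hccdef]; field_simp
    calc ((cc:ℝ):ℂ) * (2*(p:ℂ)) = (((cc * (2*(p:ℝ))):ℝ):ℂ) := by push_cast; ring
      _ = (p:ℂ) + 1 := by rw [hr]; push_cast; ring
  have hfac1 : (2*(p:ℂ) - ((p:ℂ)-1) * w) = (2*(p:ℂ)) * (1 - (bb:ℂ)*w) := by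
    linear_combination w * hbbC
  have hfac2 : (2*(p:ℂ) - ((p:ℂ)+1) * w) = (2*(p:ℂ)) * (1 - (cc:ℂ)*w) := by
    linear_combination w * hccC
  have hratio : (2*(p:ℂ) - ((p:ℂ)-1) * w) ^ p / (2*(p:ℂ) - ((p:ℂ)+1) * w) ^ p
      = (1-(bb:ℂ)*w)^p / (1-(cc:ℂ)*w)^p := by
    rw [hfac1, hfac2, mul_pow (2*(p:ℂ)) (1 - (bb:ℂ)*w) p,
      mul_pow (2*(p:ℂ)) (1 - (cc:ℂ)*w) p]
    exact mul_div_mul_left _ _ (pow_ne_zero p h2p)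
  rw [hratio]
  calc ‖1 - (1-w) * ((1-(bb:ℂ)*w)^p / (1-(cc:ℂ)*w)^p)‖
      ≤ ‖w‖^3 * (‖((gam β 0 : ℝ) : ℂ) + ((gam β 1 : ℝ) : ℂ) * w‖
        + (1 - gam β 0 - gam β 1)) := closedb
    _ < ‖w‖^3 * 1 := by
        apply mul_lt_mul_of_pos_left (factor_lt hβ0 hβ4 hw hw1)
        have : 0 < ‖w‖ := norm_pos_iff.mpr hw0
        positivity
    _ = ‖w‖^3 := mul_one _


lemma twop_ne {p : ℕ} (hp : 2 ≤ p) {w : ℂ} (hw : ‖w‖ ≤ 1) {c : ℂ} (hc : ‖c‖ < 2*(p:ℝ)) :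
    2*(p:ℂ) - c * w ≠ 0 := by
  intro h
  have h1 : (2*(p:ℂ)) = c * w := by linear_combination h
  have h2 : ‖(2*(p:ℂ))‖ = 2*(p:ℝ) := by
    have : (2*(p:ℂ)) = (((2*(p:ℝ)) : ℝ) : ℂ) := by push_cast; ring
    rw [this, Complex.norm_real, Real.norm_eq_abs, abs_of_nonneg (by positivity)]
  have h3 : ‖c * w‖ ≤ ‖c‖ := by
    rw [norm_mul]
    calc ‖c‖ * ‖w‖ ≤ ‖c‖ * 1 := mul_le_mul_of_nonneg_left hw (norm_nonneg c)
      _ = ‖c‖ := mul_one _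
  rw [← h1, h2] at h3
  linarith

lemma norm_p_add_one (p : ℕ) : ‖(p:ℂ)+1‖ = (p:ℝ)+1 := by
  have : ((p:ℂ)+1) = ((((p:ℝ)+1) : ℝ) : ℂ) := by push_cast; ring
  rw [this, Complex.norm_real, Real.norm_eq_abs, abs_of_nonneg (by positivity)]

lemma norm_p_sub_one {p : ℕ} (hp : 2 ≤ p) : ‖(p:ℂ)-1‖ = (p:ℝ)-1 := by
  have hp1 : (1:ℝ) ≤ (p:ℝ) := by exact_mod_cast Nat.one_le_of_lt hp
  have : ((p:ℂ)-1) = ((((p:ℝ)-1) : ℝ) : ℂ) := by push_cast; ring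
  rw [this, Complex.norm_real, Real.norm_eq_abs, abs_of_nonneg (by linarith)]

end Stmt14Aux

theorem stmt_14 (p : ℕ) (hp : 2 ≤ p) (V : ℕ → ℂ → ℂ) (H : ℕ → ℂ → ℂ)
    (hV0 : ∀ z, V 0 z = 1)
    (hV : ∀ k z, V (k + 1) z =
      V k z * ((p - 1) * (V k z) ^ p + (p + 1) * (1 - z)) /
        ((p + 1) * (V k z) ^ p + (p - 1) * (1 - z)))
    (hH : ∀ k z, H k z = 1 - (1 - z) / (V k z) ^ p) :
    ∀ k, 1 ≤ k → ∀ z : ℂ, ‖z‖ ≤ 1 → z ≠ 0 → z ≠ 1 →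
      ‖H k z‖ < ‖z‖ ^ (3 ^ k) ∧ (∀ j ≤ k, V j z ≠ 0) ∧
        ∀ j < k, (p + 1) * (V j z) ^ p + (p - 1) * (1 - z) ≠ 0 := by
  intro k hk z hz1 hz0 hzne1
  have hp2 : (2:ℝ) ≤ (p:ℝ) := by exact_mod_cast hp
  -- the global invariant
  have main : ∀ m : ℕ, (∀ j ≤ m, V j z ≠ 0) ∧
      (∀ j < m, ((p:ℂ) + 1) * (V j z) ^ p + ((p:ℂ) - 1) * (1 - z) ≠ 0) ∧
      ‖H m z‖ ≤ ‖z‖ ^ (3 ^ m) ∧ (1 ≤ m → ‖H m z‖ < ‖z‖ ^ (3 ^ m)) := by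
    intro m
    induction m with
    | zero =>
      refine ⟨?_, ?_, ?_, ?_⟩
      · intro j hj
        interval_cases j
        rw [hV0]
        exact one_ne_zero
      · intro j hj; omega
      · have : H 0 z = z := by
          rw [hH 0 z, hV0]
          simp
        rw [this]
        norm_num
      · intro h; omega
    | succ m ih =>
      obtain ⟨hVj, hdenj, hle, _⟩ := ih
      have hVk : V m z ≠ 0 := hVj m le_rfl
      have hVp : (V m z) ^ p ≠ 0 := pow_ne_zero _ hVk
      set w := H m z with hwdef
      have hwz : (1 : ℂ) - z = (1 - w) * (V m z) ^ p := by
        rw [hwdef, hH m z]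
        field_simp
        ring
      have hw1 : w ≠ 1 := by
        intro h
        rw [h] at hwz
        simp at hwz
        exact hzne1 (by linear_combination -hwz)
      have hzpow1 : ‖z‖ ^ (3^m) ≤ 1 := pow_le_one₀ (norm_nonneg z) hz1
      have hwle : ‖w‖ ≤ 1 := hle.trans hzpow1
      have hXne : 2*(p:ℂ) - ((p:ℂ)+1) * w ≠ 0 := by
        apply Stmt14Aux.twop_ne hp hwle
        rw [Stmt14Aux.norm_p_add_one]
        linarith
      have hYne : 2*(p:ℂ) - ((p:ℂ)-1) * w ≠ 0 := by
        apply Stmt14Aux.twop_ne hp hwle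
        rw [Stmt14Aux.norm_p_sub_one hp]
        linarith
      have hnumeq : ((p:ℂ) - 1) * (V m z) ^ p + ((p:ℂ) + 1) * (1 - z)
          = (V m z) ^ p * (2*(p:ℂ) - ((p:ℂ)+1) * w) := by
        rw [hwz]; ring
      have hdeneq : ((p:ℂ) + 1) * (V m z) ^ p + ((p:ℂ) - 1) * (1 - z)
          = (V m z) ^ p * (2*(p:ℂ) - ((p:ℂ)-1) * w) := by
        rw [hwz]; ring
      have hden : ((p:ℂ) + 1) * (V m z) ^ p + ((p:ℂ) - 1) * (1 - z) ≠ 0 := by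
        rw [hdeneq]; exact mul_ne_zero hVp hYne
      have hnum : ((p:ℂ) - 1) * (V m z) ^ p + ((p:ℂ) + 1) * (1 - z) ≠ 0 := by
        rw [hnumeq]; exact mul_ne_zero hVp hXne
      have hVk1 : V (m+1) z ≠ 0 := by
        rw [hV m z]
        exact div_ne_zero (mul_ne_zero hVk hnum) hden
      have hHk1 : H (m+1) z
          = 1 - (1-w) * ((2*(p:ℂ) - ((p:ℂ)-1)*w)^p / (2*(p:ℂ) - ((p:ℂ)+1)*w)^p) := by
        rw [hH (m+1) z, hV m z]
        rw [div_pow, mul_pow]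
        rw [hnumeq, hdeneq, hwz]
        rw [mul_pow, mul_pow]
        have hXp : (2*(p:ℂ) - ((p:ℂ)+1) * w)^p ≠ 0 := pow_ne_zero _ hXne
        have hYp : (2*(p:ℂ) - ((p:ℂ)-1) * w)^p ≠ 0 := pow_ne_zero _ hYne
        have hVpp : ((V m z)^p)^p ≠ 0 := pow_ne_zero _ hVp
        field_simp
      have hpow : (‖z‖ ^ (3^m))^3 = ‖z‖ ^ (3^(m+1)) := by
        rw [← pow_mul, pow_succ]
      have hstrict : ‖H (m+1) z‖ < ‖z‖ ^ (3^(m+1)) := by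
        by_cases hw0 : w = 0
        · have h2pne : (2*(p:ℂ)) ≠ 0 := by
            intro h
            have h' : (p:ℂ) = 0 := by linear_combination h/2
            have h'' : (p:ℝ) = 0 := by exact_mod_cast h'
            linarith
          have hzero : H (m+1) z = 0 := by
            rw [hHk1, hw0]
            simp [div_self (pow_ne_zero p h2pne)]
          rw [hzero, norm_zero]
          exact pow_pos (norm_pos_iff.mpr hz0) _
        · have hkey := Stmt14Aux.key p hp hwle hw0 hw1
          rw [← hHk1] at hkey
          calc ‖H (m+1) z‖ < ‖w‖^3 := hkey
            _ ≤ (‖z‖ ^ (3^m))^3 := pow_le_pow_left₀ (norm_nonneg w) hle 3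
            _ = ‖z‖ ^ (3^(m+1)) := hpow
      refine ⟨?_, ?_, hstrict.le, fun _ => hstrict⟩
      · intro j hj
        rcases Nat.lt_succ_iff_lt_or_eq.mp (Nat.lt_succ_of_le hj) with h | h
        · exact hVj j (by omega)
        · rw [h]; exact hVk1
      · intro j hj
        rcases Nat.lt_succ_iff_lt_or_eq.mp hj with h | h
        · exact hdenj j h
        · rw [h]; exact hden
  obtain ⟨hVj, hdenj, _, hstrict⟩ := main k
  exact ⟨hstrict hk, hVj, hdenj⟩
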